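/- For $1 < \alpha < e^{1/e}$, the sequence of iterated exponentials $a_0 = 1$, $a_{n+1} = \alpha^{a_n}$ is strictly increasing and converges to the fixed point $\omega \in (1,e)$ where $\alpha^\omega = \omega$. -/
import Mathlib


theorem power_tower_converges (α : ℝ) (h1 : 1 < α) (h2 : α < Real.exp (1 / Real.exp 1))
    (a : ℕ → ℝ) (ha0 : a 0 = 1) (ha : ∀ n, a (n + 1) = α ^ a n) :
    StrictMono a ∧ ∃ ω : ℝ, ω ∈ Set.Ioo 1 (Real.exp 1) ∧ α ^ ω = ω ∧
      Filter.Tendsto a Filter.atTop (nhds ω) := by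
  have hα0 : (0 : ℝ) < α := by linarith
  have hepos : (0 : ℝ) < Real.exp 1 := Real.exp_pos 1
  have hlog : Real.log α < 1 / Real.exp 1 := by
    have := Real.log_lt_log hα0 h2
    rwa [Real.log_exp] at this
  have hαe : α ^ Real.exp 1 < Real.exp 1 := by
    rw [Real.rpow_def_of_pos hα0]
    have h : Real.log α * Real.exp 1 < 1 := (lt_div_iff₀ hepos).mp hlog
    exact Real.exp_lt_exp.mpr h
  have hub : ∀ n, a n ≤ Real.exp 1 := by
    intro n
    induction n with
    | zero => rw [ha0]; linarith [Real.add_one_le_exp (1 : ℝ)]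
    | succ n ih =>
      rw [ha n]
      exact le_trans ((Real.rpow_le_rpow_left_iff h1).mpr ih) hαe.le
  have hub2 : ∀ n, a n ≤ α ^ Real.exp 1 := by
    intro n
    cases n with
    | zero =>
      rw [ha0]
      calc (1:ℝ) = α ^ (0:ℝ) := (Real.rpow_zero α).symm
        _ ≤ α ^ Real.exp 1 := (Real.rpow_le_rpow_left_iff h1).mpr hepos.le
    | succ n =>
      rw [ha n]
      exact (Real.rpow_le_rpow_left_iff h1).mpr (hub n)
  have hsm : StrictMono a := by
    apply strictMono_nat_of_lt_succ
    intro n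
    induction n with
    | zero => rw [ha0, ha 0, ha0, Real.rpow_one]; exact h1
    | succ n ih =>
      rw [ha (n+1)]
      calc a (n+1) = α ^ a n := ha n
        _ < α ^ a (n+1) := (Real.rpow_lt_rpow_left_iff h1).mpr ih
  have hbdd : BddAbove (Set.range a) := ⟨Real.exp 1, by rintro x ⟨n, rfl⟩; exact hub n⟩
  have ht : Filter.Tendsto a Filter.atTop (nhds (⨆ n, a n)) :=
    tendsto_atTop_ciSup hsm.monotone hbdd
  set L := iSup a with hLdef
  have hL1 : 1 < L := by
    have h1L : a 1 ≤ L := le_ciSup hbdd 1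
    have ha1 : a 1 = α := by rw [ha 0, ha0, Real.rpow_one]
    linarith
  have hLe : L < Real.exp 1 := by
    have : L ≤ α ^ Real.exp 1 := ciSup_le hub2
    linarith
  have hcont : Continuous fun x : ℝ => α ^ x := by
    have heq : (fun x : ℝ => α ^ x) = fun x => Real.exp (Real.log α * x) := by
      funext x; rw [Real.rpow_def_of_pos hα0]
    rw [heq]
    exact Real.continuous_exp.comp (continuous_const.mul continuous_id)
  have ht1 : Filter.Tendsto (fun n => a (n + 1)) Filter.atTop (nhds L) :=
    ht.comp (Filter.tendsto_add_atTop_nat 1)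
  have ht2 : Filter.Tendsto (fun n => α ^ a n) Filter.atTop (nhds (α ^ L)) :=
    (hcont.tendsto L).comp ht
  have hfix : α ^ L = L := by
    have heq2 : (fun n => a (n + 1)) = fun n => α ^ a n := funext ha
    rw [heq2] at ht1
    exact tendsto_nhds_unique ht2 ht1
  exact ⟨hsm, L, ⟨hL1, hLe⟩, hfix, ht⟩
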